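/- The Nagamochi–Ibaraki forest decomposition yields a k-connectivity certificate: let F_1, …, F_k be edge-disjoint forests constructed greedily by inserting each arriving edge e into F_i for the smallest i such that F_i ∪ {e} is acyclic (discarding e if no such i ≤ k exists). Then for every cut (S, V∖S) of the input graph G of size at most k, every edge of G crossing (S, V∖S) belongs to F_1 ∪ ⋯ ∪ F_k, and |F_1 ∪ ⋯ ∪ F_k| ≤ k(n−1). -/

import Mathlib

open Finset SimpleGraph

set_option linter.unusedSectionVars false
set_option maxHeartbeats 1000000

section AuxGraph
variable {V : Type*} [Fintype V] [DecidableEq V]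

lemma isAcyclic_anti {G H : SimpleGraph V} (h : H ≤ G) (hG : G.IsAcyclic) : H.IsAcyclic :=
  fun _ c hc => hG (c.mapLe h) (hc.mapLe h)

lemma notAcyclic_mono {A B : Finset (Sym2 V)} (hAB : A ⊆ B)
    (h : ¬ (fromEdgeSet (A : Set (Sym2 V))).IsAcyclic) :
    ¬ (fromEdgeSet (B : Set (Sym2 V))).IsAcyclic :=
  fun hB => h (isAcyclic_anti (fromEdgeSet_mono (by exact_mod_cast hAB)) hB)

lemma reachable_of_not_acyclic {G : SimpleGraph V} (hG : G.IsAcyclic) {x y : V} (hxy : x ≠ y)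
    (h : ¬ (G ⊔ edge x y).IsAcyclic) : G.Reachable x y := by
  rw [IsAcyclic] at h
  push_neg at h
  obtain ⟨v, c, hc⟩ := h
  by_cases he : s(x, y) ∈ c.edges
  · have hr := (adj_and_reachable_delete_edges_iff_exists_cycle
      (G := G ⊔ edge x y) (v := x) (w := y)).mpr ⟨v, c, hc, he⟩
    refine hr.2.mono ?_
    intro a b hab
    rw [deleteEdges, sdiff_adj] at hab
    obtain ⟨hab1, hab2⟩ := hab
    rcases (sup_adj _ _ _ _).mp hab1 with h1 | h2
    · exact h1
    · exfalso
      apply hab2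
      rw [fromEdgeSet_adj]
      rw [edge_adj] at h2
      refine ⟨?_, h2.2⟩
      rcases h2.1 with ⟨rfl, rfl⟩ | ⟨rfl, rfl⟩
      · exact Set.mem_singleton _
      · rw [Sym2.eq_swap]; exact Set.mem_singleton _
  · have hsub : ∀ f ∈ c.edges, f ∈ G.edgeSet := by
      intro f hf
      have hf' := c.edges_subset_edgeSet hf
      rw [edgeSet_sup, edge_edgeSet_of_ne hxy] at hf'
      rcases hf' with h1 | h2
      · exact h1
      · exact absurd (h2 ▸ hf) he
    exact absurd (hc.transfer hsub) (hG _)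

lemma acyclic_sup_edge_of_not_reachable {G : SimpleGraph V} (hG : G.IsAcyclic) {x y : V}
    (hxy : x ≠ y) (h : ¬ G.Reachable x y) : (G ⊔ edge x y).IsAcyclic := by
  by_contra hc
  exact h (reachable_of_not_acyclic hG hxy hc)

lemma edgeFinset_fromEdgeSet_of_nondiag (F : Finset (Sym2 V)) (hd : ∀ e ∈ F, ¬ e.IsDiag)
    [Fintype (fromEdgeSet (F : Set (Sym2 V))).edgeSet] :
    (fromEdgeSet (F : Set (Sym2 V))).edgeFinset = F := by
  ext f
  rw [mem_edgeFinset, edgeSet_fromEdgeSet]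
  constructor
  · rintro ⟨hf, -⟩; exact_mod_cast hf
  · intro hf; exact ⟨by exact_mod_cast hf, hd f hf⟩

lemma forest_card : ∀ (m : ℕ) (F : Finset (Sym2 V)), (∀ e ∈ F, ¬ e.IsDiag) →
    (fromEdgeSet (F : Set (Sym2 V))).IsAcyclic →
    (Fintype.card V).choose 2 ≤ F.card + m → F.card ≤ Fintype.card V - 1 := by
  intro m
  induction m with
  | zero =>
    intro F hd hac hm
    cases isEmpty_or_nonempty V with
    | inl hV =>
      have : F = ∅ := Finset.eq_empty_of_forall_notMem fun e _ => (Sym2.instIsEmpty.false e)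
      simp [this]
    | inr hV =>
      by_cases hconn : (fromEdgeSet (F : Set (Sym2 V))).Preconnected
      · haveI : Fintype (fromEdgeSet (F : Set (Sym2 V))).edgeSet := Fintype.ofFinite _
        have htree : (fromEdgeSet (F : Set (Sym2 V))).IsTree := ⟨SimpleGraph.Connected.mk hconn, hac⟩
        have hc := htree.card_edgeFinset
        rw [edgeFinset_fromEdgeSet_of_nondiag F hd] at hc
        omega
      · exfalso
        rw [SimpleGraph.Preconnected] at hconn
        push_neg at hconn
        obtain ⟨x, y, hxy⟩ := hconn
        have hne : x ≠ y := by rintro rfl; exact hxy (SimpleGraph.Reachable.refl x)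
        have hF : s(x, y) ∉ F := fun h =>
          hxy (SimpleGraph.Adj.reachable ((fromEdgeSet_adj _).mpr ⟨by exact_mod_cast h, hne⟩))
        have hd' : ∀ e ∈ insert s(x, y) F, ¬ e.IsDiag := by
          intro e he
          rcases Finset.mem_insert.mp he with rfl | he'
          · simpa using hne
          · exact hd e he'
        have hGF' : fromEdgeSet ((insert s(x, y) F : Finset (Sym2 V)) : Set (Sym2 V))
            = fromEdgeSet (F : Set (Sym2 V)) ⊔ edge x y := by
          rw [Finset.coe_insert, Set.insert_eq, fromEdgeSet_union, sup_comm]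
          rfl
        haveI : Fintype (fromEdgeSet ((insert s(x, y) F : Finset (Sym2 V)) : Set (Sym2 V))).edgeSet :=
          Fintype.ofFinite _
        have hle := card_edgeFinset_le_card_choose_two
          (G := fromEdgeSet ((insert s(x, y) F : Finset (Sym2 V)) : Set (Sym2 V)))
        rw [edgeFinset_fromEdgeSet_of_nondiag _ hd', Finset.card_insert_of_notMem hF] at hle
        omega
  | succ m ih =>
    intro F hd hac hm
    cases isEmpty_or_nonempty V with
    | inl hV =>
      have : F = ∅ := Finset.eq_empty_of_forall_notMem fun e _ => (Sym2.instIsEmpty.false e)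
      simp [this]
    | inr hV =>
      by_cases hconn : (fromEdgeSet (F : Set (Sym2 V))).Preconnected
      · haveI : Fintype (fromEdgeSet (F : Set (Sym2 V))).edgeSet := Fintype.ofFinite _
        have htree : (fromEdgeSet (F : Set (Sym2 V))).IsTree := ⟨SimpleGraph.Connected.mk hconn, hac⟩
        have hc := htree.card_edgeFinset
        rw [edgeFinset_fromEdgeSet_of_nondiag F hd] at hc
        omega
      · rw [SimpleGraph.Preconnected] at hconn
        push_neg at hconn
        obtain ⟨x, y, hxy⟩ := hconn
        have hne : x ≠ y := by rintro rfl; exact hxy (SimpleGraph.Reachable.refl x)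
        have hF : s(x, y) ∉ F := fun h =>
          hxy (SimpleGraph.Adj.reachable ((fromEdgeSet_adj _).mpr ⟨by exact_mod_cast h, hne⟩))
        have hd' : ∀ e ∈ insert s(x, y) F, ¬ e.IsDiag := by
          intro e he
          rcases Finset.mem_insert.mp he with rfl | he'
          · simpa using hne
          · exact hd e he'
        have hGF' : fromEdgeSet ((insert s(x, y) F : Finset (Sym2 V)) : Set (Sym2 V))
            = fromEdgeSet (F : Set (Sym2 V)) ⊔ edge x y := by
          rw [Finset.coe_insert, Set.insert_eq, fromEdgeSet_union, sup_comm]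
          rfl
        have hac' : (fromEdgeSet ((insert s(x, y) F : Finset (Sym2 V)) : Set (Sym2 V))).IsAcyclic := by
          rw [hGF']
          exact acyclic_sup_edge_of_not_reachable hac hne hxy
        have := ih (insert s(x, y) F) hd' hac'
          (by rw [Finset.card_insert_of_notMem hF]; omega)
        rw [Finset.card_insert_of_notMem hF] at this
        omega

end AuxGraph

/-- The edges of the edge set F crossing the cut (S, V∖S). -/
def cutEdges {V : Type*} [Fintype V] [DecidableEq V]
    (F : Finset (Sym2 V)) (S : Finset V) : Finset (Sym2 V) :=
  F.filter (fun e => ∃ x y : V, e = s(x, y) ∧ x ∈ S ∧ y ∉ S)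

open Classical in
/-- One step of the Nagamochi–Ibaraki greedy: insert the arriving edge e into the
first of the k forests F_0,…,F_{k−1} in which it does not close a cycle
(discard it if none exists). -/
noncomputable def NIstep {V : Type*} [Fintype V] [DecidableEq V] (k : ℕ)
    (F : ℕ → Finset (Sym2 V)) (e : Sym2 V) : ℕ → Finset (Sym2 V) :=
  if h : ∃ i, i < k ∧
      (SimpleGraph.fromEdgeSet ((insert e (F i) : Finset (Sym2 V)) : Set (Sym2 V))).IsAcyclic
  then fun j => if j = Nat.find h then insert e (F j) else F j
  else F

/-- The k forests produced by processing the stream l of edges greedily,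
starting from empty forests. -/
noncomputable def NIforests {V : Type*} [Fintype V] [DecidableEq V] (k : ℕ)
    (l : List (Sym2 V)) : ℕ → Finset (Sym2 V) :=
  l.foldl (NIstep k) (fun _ => ∅)

section AuxInv
variable {V : Type*} [Fintype V] [DecidableEq V]

def NIInv (k : ℕ) (E : Finset (Sym2 V)) (F : ℕ → Finset (Sym2 V)) : Prop :=
  (∀ i, (fromEdgeSet ((F i : Finset (Sym2 V)) : Set (Sym2 V))).IsAcyclic) ∧
  (∀ i j, i < j → ∀ e ∈ F j,
    ¬ (fromEdgeSet ((insert e (F i) : Finset (Sym2 V)) : Set (Sym2 V))).IsAcyclic) ∧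
  (∀ i, F i ⊆ E) ∧ (∀ i, k ≤ i → F i = ∅)

lemma NIInv.disj {k : ℕ} {E : Finset (Sym2 V)} {F : ℕ → Finset (Sym2 V)} (h : NIInv k E F)
    {i j : ℕ} (hij : i ≠ j) {f : Sym2 V} (hi : f ∈ F i) (hj : f ∈ F j) : False := by
  rcases Nat.lt_or_ge i j with hlt | hge
  · exact h.2.1 i j hlt f hj (by rw [Finset.insert_eq_self.mpr hi]; exact h.1 i)
  · have hlt : j < i := lt_of_le_of_ne hge (Ne.symm hij)
    exact h.2.1 j i hlt f hi (by rw [Finset.insert_eq_self.mpr hj]; exact h.1 j)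

lemma NIstep_subset (k : ℕ) (F : ℕ → Finset (Sym2 V)) (e : Sym2 V) (i : ℕ) :
    F i ⊆ NIstep k F e i := by
  by_cases h : ∃ i, i < k ∧
      (SimpleGraph.fromEdgeSet ((insert e (F i) : Finset (Sym2 V)) : Set (Sym2 V))).IsAcyclic
  · unfold NIstep; rw [dif_pos h]
    try dsimp only
    split
    · exact Finset.subset_insert _ _
    · exact Finset.Subset.rfl
  · unfold NIstep; rw [dif_neg h]

lemma NIstep_inv {k : ℕ} {E : Finset (Sym2 V)} {F : ℕ → Finset (Sym2 V)} {e : Sym2 V}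
    (hInv : NIInv k E F) (he : e ∈ E) : NIInv k E (NIstep k F e) := by
  classical
  by_cases h : ∃ i, i < k ∧
      (SimpleGraph.fromEdgeSet ((insert e (F i) : Finset (Sym2 V)) : Set (Sym2 V))).IsAcyclic
  · unfold NIstep; rw [dif_pos h]
    have hj0k : Nat.find h < k := (Nat.find_spec h).1
    have hj0 := (Nat.find_spec h).2
    refine ⟨?_, ?_, ?_, ?_⟩
    · intro i
      try dsimp only
      by_cases hi : i = Nat.find h
      · rw [if_pos hi]; subst hi; exact hj0
      · rw [if_neg hi]; exact hInv.1 i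
    · intro i j hij f hf
      try dsimp only at hf ⊢
      by_cases hi : i = Nat.find h
      · rw [if_pos hi]
        subst hi
        rw [if_neg (by omega)] at hf
        exact notAcyclic_mono
          (Finset.insert_subset_insert f (Finset.subset_insert e _))
          (hInv.2.1 _ j hij f hf)
      · rw [if_neg hi]
        by_cases hj : j = Nat.find h
        · subst hj
          rw [if_pos rfl] at hf
          rcases Finset.mem_insert.mp hf with rfl | hf'
          · intro hacy
            exact Nat.find_min h hij ⟨lt_trans hij hj0k, hacy⟩
          · exact hInv.2.1 i _ hij f hf'
        · rw [if_neg hj] at hf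
          exact hInv.2.1 i j hij f hf
    · intro i
      try dsimp only
      by_cases hi : i = Nat.find h
      · rw [if_pos hi]; exact Finset.insert_subset he (hInv.2.2.1 i)
      · rw [if_neg hi]; exact hInv.2.2.1 i
    · intro i hik
      try dsimp only
      rw [if_neg (by omega)]
      exact hInv.2.2.2 i hik
  · unfold NIstep; rw [dif_neg h]
    exact hInv

lemma NIstep_or (k : ℕ) (F : ℕ → Finset (Sym2 V)) (e : Sym2 V) :
    (∃ j, j < k ∧ e ∈ NIstep k F e j) ∨
    (NIstep k F e = F ∧ ∀ i, i < k →
      ¬ (fromEdgeSet ((insert e (F i) : Finset (Sym2 V)) : Set (Sym2 V))).IsAcyclic) := by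
  classical
  by_cases h : ∃ i, i < k ∧
      (SimpleGraph.fromEdgeSet ((insert e (F i) : Finset (Sym2 V)) : Set (Sym2 V))).IsAcyclic
  · left
    refine ⟨Nat.find h, (Nat.find_spec h).1, ?_⟩
    unfold NIstep; rw [dif_pos h]
    try dsimp only
    rw [if_pos rfl]
    exact Finset.mem_insert_self _ _
  · right
    refine ⟨by unfold NIstep; rw [dif_neg h], ?_⟩
    push_neg at h
    exact h

lemma foldl_subset (k : ℕ) (l : List (Sym2 V)) :
    ∀ (F : ℕ → Finset (Sym2 V)) (i : ℕ), F i ⊆ (l.foldl (NIstep k) F) i := by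
  induction l with
  | nil => intro F i; exact Finset.Subset.rfl
  | cons a t ih =>
    intro F i
    exact (NIstep_subset k F a i).trans (ih (NIstep k F a) i)

lemma foldl_inv (k : ℕ) {E : Finset (Sym2 V)} (l : List (Sym2 V)) :
    ∀ (F : ℕ → Finset (Sym2 V)), (∀ e ∈ l, e ∈ E) → NIInv k E F →
      NIInv k E (l.foldl (NIstep k) F) := by
  induction l with
  | nil => intro F _ hInv; exact hInv
  | cons a t ih =>
    intro F hE hInv
    exact ih (NIstep k F a) (fun e he => hE e (List.mem_cons_of_mem a he))
      (NIstep_inv hInv (hE a (List.mem_cons_self)))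

lemma foldl_mem (k : ℕ) {E : Finset (Sym2 V)} (l : List (Sym2 V)) :
    ∀ (F : ℕ → Finset (Sym2 V)), NIInv k E F → (∀ e ∈ l, e ∈ E) →
    ∀ e ∈ l, (∃ j, j < k ∧ e ∈ (l.foldl (NIstep k) F) j) ∨
      (∀ i, i < k → ¬ (fromEdgeSet
        ((insert e ((l.foldl (NIstep k) F) i) : Finset (Sym2 V)) : Set (Sym2 V))).IsAcyclic) := by
  induction l with
  | nil => intro F _ _ e he; exact absurd he List.not_mem_nil
  | cons a t ih =>
    intro F hInv hE e he
    rcases List.mem_cons.mp he with rfl | het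
    · rcases NIstep_or k F e with ⟨j, hj, hmem⟩ | ⟨heq, hall⟩
      · exact Or.inl ⟨j, hj, foldl_subset k t (NIstep k F e) j hmem⟩
      · right
        intro i hik
        rw [List.foldl_cons, heq]
        exact notAcyclic_mono
          (Finset.insert_subset_insert e (foldl_subset k t F i)) (hall i hik)
    · exact ih (NIstep k F a) (NIstep_inv hInv (hE a (List.mem_cons_self)))
        (fun f hf => hE f (List.mem_cons_of_mem a hf)) e het

end AuxInv

/-- The Nagamochi–Ibaraki forest decomposition is a k-connectivity
certificate: for every cut of the streamed graph of size at most k, all crossing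
edges are retained in F_1 ∪ ⋯ ∪ F_k, and the total number of retained edges is at
most k(n−1). -/
theorem stmt12 {V : Type*} [Fintype V] [DecidableEq V] (k : ℕ)
    (l : List (Sym2 V)) (hl : ∀ e ∈ l, ¬ e.IsDiag) :
    (∀ S : Finset V, S.Nonempty → S ≠ Finset.univ →
      (cutEdges l.toFinset S).card ≤ k →
      cutEdges l.toFinset S ⊆ (Finset.range k).biUnion (NIforests k l)) ∧
    ((Finset.range k).biUnion (NIforests k l)).card ≤ k * (Fintype.card V - 1) := by
  classical
  have hE : ∀ e ∈ l, e ∈ l.toFinset := fun e he => List.mem_toFinset.mpr he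
  have hInv0 : NIInv k l.toFinset (fun _ => (∅ : Finset (Sym2 V))) := by
    refine ⟨?_, ?_, ?_, ?_⟩
    · intro i
      simpa using SimpleGraph.isAcyclic_bot
    · intro i j _ e he
      simp at he
    · intro i
      simp
    · intro i _
      rfl
  have hInvF : NIInv k l.toFinset (NIforests k l) := foldl_inv k l _ hE hInv0
  constructor
  · intro S hS hSuniv hcard f hf
    by_contra hnot
    have hfE : f ∈ l.toFinset := (Finset.mem_filter.mp hf).1
    obtain ⟨x, y, hfxy, hxS, hyS⟩ := (Finset.mem_filter.mp hf).2
    subst hfxy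
    have hne : x ≠ y := fun h => hyS (h ▸ hxS)
    have hl' : s(x, y) ∈ l := List.mem_toFinset.mp hfE
    rcases foldl_mem k l _ hInv0 hE s(x, y) hl' with ⟨j, hj, hmem⟩ | hrej
    · exact hnot (Finset.mem_biUnion.mpr ⟨j, Finset.mem_range.mpr hj, hmem⟩)
    · have hnotin : ∀ i, i < k → s(x, y) ∉ NIforests k l i := fun i hik hm =>
        hnot (Finset.mem_biUnion.mpr ⟨i, Finset.mem_range.mpr hik, hm⟩)
      have hreach : ∀ i, i < k →
          (fromEdgeSet ((NIforests k l i : Finset (Sym2 V)) : Set (Sym2 V))).Reachable x y := by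
        intro i hik
        have hni := hrej i hik
        apply reachable_of_not_acyclic (hInvF.1 i) hne
        have heq : fromEdgeSet ((insert s(x, y) (NIforests k l i) : Finset (Sym2 V)) : Set (Sym2 V))
            = fromEdgeSet ((NIforests k l i : Finset (Sym2 V)) : Set (Sym2 V)) ⊔ edge x y := by
          rw [Finset.coe_insert, Set.insert_eq, fromEdgeSet_union, sup_comm]
          rfl
        rw [← heq]
        exact hni
      have hexists : ∀ i, ∃ g : Sym2 V, i < k →
          g ∈ NIforests k l i ∧ g ∈ cutEdges l.toFinset S ∧ g ≠ s(x, y) := by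
        intro i
        by_cases hik : i < k
        · obtain ⟨p⟩ := hreach i hik
          obtain ⟨d, _, hdS, hdS'⟩ := p.exists_boundary_dart (↑S : Set V)
            (Finset.mem_coe.mpr hxS) (fun hc => hyS (Finset.mem_coe.mp hc))
          have hadj := d.adj
          rw [fromEdgeSet_adj] at hadj
          have hmem : s(d.fst, d.snd) ∈ NIforests k l i := Finset.mem_coe.mp hadj.1
          refine ⟨s(d.fst, d.snd), fun _ => ⟨hmem, ?_, ?_⟩⟩
          · refine Finset.mem_filter.mpr ⟨hInvF.2.2.1 i hmem, d.fst, d.snd, rfl, ?_, ?_⟩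
            · exact Finset.mem_coe.mp hdS
            · exact fun hc => hdS' (Finset.mem_coe.mpr hc)
          · intro hcontra
            exact hnotin i hik (hcontra ▸ hmem)
        · exact ⟨s(x, y), fun h => absurd h hik⟩
      choose g hg using hexists
      have hinj : Set.InjOn g ↑(Finset.range k) := by
        intro i hi j hj hgij
        by_contra hij
        exact NIInv.disj hInvF hij (hg i (Finset.mem_range.mp hi)).1
          (hgij ▸ (hg j (Finset.mem_range.mp (Finset.mem_coe.mp hj))).1)
      have hsub : insert s(x, y) ((Finset.range k).image g) ⊆ cutEdges l.toFinset S := by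
        intro a ha
        rcases Finset.mem_insert.mp ha with rfl | ha'
        · exact hf
        · obtain ⟨i, hi, rfl⟩ := Finset.mem_image.mp ha'
          exact (hg i (Finset.mem_range.mp hi)).2.1
      have hnotmem : s(x, y) ∉ (Finset.range k).image g := by
        intro hmem
        obtain ⟨i, hi, hgi⟩ := Finset.mem_image.mp hmem
        exact (hg i (Finset.mem_range.mp hi)).2.2 hgi
      have hcard2 : (insert s(x, y) ((Finset.range k).image g)).card = k + 1 := by
        rw [Finset.card_insert_of_notMem hnotmem, Finset.card_image_of_injOn hinj,
          Finset.card_range]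
      have := Finset.card_le_card hsub
      omega
  · calc ((Finset.range k).biUnion (NIforests k l)).card
        ≤ ∑ i ∈ Finset.range k, (NIforests k l i).card := Finset.card_biUnion_le
      _ ≤ ∑ _i ∈ Finset.range k, (Fintype.card V - 1) := by
          refine Finset.sum_le_sum fun i _ => ?_
          exact forest_card ((Fintype.card V).choose 2) (NIforests k l i)
            (fun e he => hl e (List.mem_toFinset.mp (hInvF.2.2.1 i he)))
            (hInvF.1 i) (Nat.le_add_left _ _)
      _ = k * (Fintype.card V - 1) := by
          rw [Finset.sum_const, Finset.card_range, smul_eq_mul]
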